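/- Let d = 2, m ≥ 2, ω ∈ Ω_{2,m}, and let ξ, η ∈ X^ℕ with ξ ≠ η. Then (Γ_ξ, ξ) and (Γ_η, η) are isomorphic as rooted, undirected, unlabeled graphs if and only if neither ξ nor η is cofinal with the constant word 1^ℕ. -/

import Mathlib

open MeasureTheory

noncomputable section

/-- The boundary of the `d`-regular rooted tree: infinite words over `X = {0,…,d-1}`,
identified with `ZMod d`. -/
abbrev Bd (d : ℕ) : Type := ℕ → ZMod d
/-- The rooted automorphism `a`: adds 1 (mod `d`) to the first letter. -/
def aMap (d : ℕ) (ξ : Bd d) : Bd d := fun n => if n = 0 then ξ 0 + 1 else ξ n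

open scoped Classical in
/-- The spinal automorphism `b_ω`: if `ξ` starts with `(d-1)^r 0`, add `ω r b` to the
letter at position `r + 1`; otherwise fix `ξ`. -/
def bMap (d m : ℕ) (ω : ℕ → ((Fin m → ZMod d) →+ ZMod d)) (b : Fin m → ZMod d)
    (ξ : Bd d) : Bd d := fun n =>
  if n ≠ 0 ∧ (∀ i, i < n - 1 → ξ i = (d : ZMod d) - 1) ∧ ξ (n - 1) = 0 then
    ξ n + ω (n - 1) b
  else ξ n
/-- The spinal generating set `S = {a^j : 1 ≤ j ≤ d-1} ∪ {b_ω : b ∈ B ∖ {0}}`,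
as a set of self-maps of the boundary. -/
def genSet (d m : ℕ) (ω : ℕ → ((Fin m → ZMod d) →+ ZMod d)) : Set (Bd d → Bd d) :=
  {f | ∃ j, 1 ≤ j ∧ j ≤ d - 1 ∧ f = (aMap d)^[j]} ∪ {f | ∃ b, b ≠ 0 ∧ f = bMap d m ω b}
/-- Membership in `Ω_{d,m}`: all `ω_n` are surjective and `⋂_{j ≥ i} ker ω_j = {0}`
for every `i ≥ 0`. -/
def InOmega (d m : ℕ) (ω : ℕ → ((Fin m → ZMod d) →+ ZMod d)) : Prop :=
  (∀ n, Function.Surjective (ω n)) ∧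
  ∀ i : ℕ, ∀ b : Fin m → ZMod d, (∀ j, i ≤ j → ω j b = 0) → b = 0
/-- Two boundary points are cofinal if they agree at all sufficiently large positions. -/
def Cofinal {d : ℕ} (ξ η : Bd d) : Prop := ∃ N, ∀ n, N ≤ n → ξ n = η n

/-- The cofinality class of `ξ`. -/
def Cof {d : ℕ} (ξ : Bd d) : Set (Bd d) := {η | Cofinal ξ η}

theorem self_mem_Cof {d : ℕ} (ξ : Bd d) : ξ ∈ Cof ξ := ⟨0, fun _ _ => rfl⟩
/-- Edge multiplicity in the Schreier graph `Γ_ξ`: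
`mult(u, v) = card {s ∈ S : s · u = v}`. -/
def mult (d m : ℕ) (ω : ℕ → ((Fin m → ZMod d) →+ ZMod d)) (u v : Bd d) : ℕ :=
  Nat.card {f : Bd d → Bd d // f ∈ genSet d m ω ∧ f u = v}
/-- `φ` is an isomorphism of rooted, undirected, unlabeled graphs `(Γ_ξ, ξ) → (Γ_η, η)`:
a bijection `Cof(ξ) → Cof(η)` sending `ξ` to `η` and preserving edge multiplicities. -/
def IsRootedIso (d m : ℕ) (ω : ℕ → ((Fin m → ZMod d) →+ ZMod d)) (ξ η : Bd d)
    (φ : ↥(Cof ξ) ≃ ↥(Cof η)) : Prop :=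
  φ ⟨ξ, self_mem_Cof ξ⟩ = ⟨η, self_mem_Cof η⟩ ∧
  ∀ u v : ↥(Cof ξ), mult d m ω ↑u ↑v = mult d m ω ↑(φ u) ↑(φ v)

namespace SpinalAux

abbrev V := Bd 2

lemma zmod2_dichotomy (x : ZMod 2) : x = 0 ∨ x = 1 := by revert x; decide
lemma zmod2_ne_zero_iff (x : ZMod 2) : x ≠ 0 ↔ x = 1 := by revert x; decide
lemma zmod2_add_one_ne (x : ZMod 2) : x + 1 ≠ x := by revert x; decide
lemma zmod2_two_sub_one : (2 : ZMod 2) - 1 = 1 := by decide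

/-- flip position `k` -/
def flip (k : ℕ) (ζ : V) : V := fun n => if n = k then ζ n + 1 else ζ n

@[simp] lemma flip_self (k : ℕ) (ζ : V) : flip k ζ k = ζ k + 1 := by simp [flip]
lemma flip_other (k : ℕ) (ζ : V) {n : ℕ} (h : n ≠ k) : flip k ζ n = ζ n := by simp [flip, h]
lemma zmod2_add_one_one (x : ZMod 2) : x + 1 + 1 = x := by revert x; decide

lemma flip_flip (k : ℕ) (ζ : V) : flip k (flip k ζ) = ζ := by
  funext n; by_cases h : n = k
  · subst h; simp [flip, zmod2_add_one_one]
  · simp [flip, h]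
lemma flip_ne (k : ℕ) (ζ : V) : flip k ζ ≠ ζ := by
  intro h
  have := congrFun h k
  simp only [flip_self] at this
  exact zmod2_add_one_ne _ this

def Astep : V → V := aMap 2

lemma Astep_eq_flip : Astep = flip 0 := by
  funext ζ n
  by_cases h : n = 0 <;> simp [Astep, aMap, flip, h]

lemma Astep_apply_zero (ζ : V) : Astep ζ 0 = ζ 0 + 1 := by simp [Astep_eq_flip]
lemma Astep_apply_pos (ζ : V) {n : ℕ} (h : n ≠ 0) : Astep ζ n = ζ n := by
  rw [Astep_eq_flip]; exact flip_other _ _ h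

lemma Astep_ne (ζ : V) : Astep ζ ≠ ζ := by rw [Astep_eq_flip]; exact flip_ne 0 ζ
lemma Astep_invol (ζ : V) : Astep (Astep ζ) = ζ := by rw [Astep_eq_flip]; exact flip_flip 0 ζ

def hasZero (ζ : V) : Prop := ∃ i, ζ i = 0

open scoped Classical in
def Bstep (ζ : V) : V := if h : hasZero ζ then flip (Nat.find h + 1) ζ else ζ

lemma Bstep_of_hasZero {ζ : V} (h : hasZero ζ) : Bstep ζ = flip (Nat.find h + 1) ζ := dif_pos h
lemma Bstep_of_not {ζ : V} (h : ¬ hasZero ζ) : Bstep ζ = ζ := dif_neg h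

lemma find_lt_imp_one {ζ : V} (h : hasZero ζ) {i : ℕ} (hi : i < Nat.find h) : ζ i = 1 :=
  (zmod2_ne_zero_iff _).mp (Nat.find_min h hi)

lemma hasZero_flip_find {ζ : V} (h : hasZero ζ) :
    ∃ h' : hasZero (flip (Nat.find h + 1) ζ), Nat.find h' = Nat.find h := by
  have hz : flip (Nat.find h + 1) ζ (Nat.find h) = 0 := by
    rw [flip_other _ _ (by omega)]; exact Nat.find_spec h
  refine ⟨⟨_, hz⟩, ?_⟩
  apply le_antisymm (Nat.find_min' _ hz)
  by_contra hlt
  push_neg at hlt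
  have := Nat.find_spec (⟨_, hz⟩ : hasZero (flip (Nat.find h + 1) ζ))
  rw [flip_other _ _ (by omega)] at this
  exact Nat.find_min h hlt this

lemma Bstep_invol (ζ : V) : Bstep (Bstep ζ) = ζ := by
  by_cases h : hasZero ζ
  · obtain ⟨h', hfind⟩ := hasZero_flip_find h
    rw [Bstep_of_hasZero h, Bstep_of_hasZero h', hfind, flip_flip]
  · rw [Bstep_of_not h, Bstep_of_not h]

lemma Bstep_ne {ζ : V} (h : hasZero ζ) : Bstep ζ ≠ ζ := by
  rw [Bstep_of_hasZero h]; exact flip_ne _ _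

lemma Bstep_apply_zero (ζ : V) : Bstep ζ 0 = ζ 0 := by
  by_cases h : hasZero ζ
  · rw [Bstep_of_hasZero h, flip_other _ _ (by omega)]
  · rw [Bstep_of_not h]

lemma Astep_ne_Bstep (ζ : V) : Astep ζ ≠ Bstep ζ := by
  intro h
  have := congrFun h 0
  rw [Astep_apply_zero, Bstep_apply_zero] at this
  exact zmod2_add_one_ne _ this

end SpinalAux
namespace SpinalAux

variable {m : ℕ} {ω : ℕ → ((Fin m → ZMod 2) →+ ZMod 2)}

lemma zmod2_cast_two_sub_one : ((2:ℕ) : ZMod 2) - 1 = 1 := by decide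

lemma bMap_cond_iff {ζ : V} (h : hasZero ζ) (n : ℕ) :
    (n ≠ 0 ∧ (∀ i, i < n - 1 → ζ i = ((2:ℕ) : ZMod 2) - 1) ∧ ζ (n - 1) = 0) ↔
      n = Nat.find h + 1 := by
  constructor
  · rintro ⟨hn0, hone, hz⟩
    have hle : Nat.find h ≤ n - 1 := Nat.find_min' h hz
    rcases eq_or_lt_of_le hle with heq | hlt
    · omega
    · have := hone _ hlt
      rw [zmod2_cast_two_sub_one] at this
      have h0 := Nat.find_spec h
      rw [this] at h0; exact absurd h0 (by decide)
  · rintro rfl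
    refine ⟨by omega, ?_, ?_⟩
    · intro i hi
      rw [zmod2_cast_two_sub_one]
      exact find_lt_imp_one h (by omega)
    · simpa using Nat.find_spec h

lemma hasZero_Bstep {ζ : V} (h : hasZero ζ) :
    ∃ h' : hasZero (Bstep ζ), Nat.find h' = Nat.find h := by
  rw [Bstep_of_hasZero h]; exact hasZero_flip_find h

lemma bMap_of_hasZero (b : Fin m → ZMod 2) {ζ : V} (h : hasZero ζ) :
    bMap 2 m ω b ζ = if ω (Nat.find h) b = 1 then Bstep ζ else ζ := by
  rw [Bstep_of_hasZero h]
  funext n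
  by_cases hc : n = Nat.find h + 1
  · subst hc
    unfold bMap
    rw [if_pos ((bMap_cond_iff h _).mpr rfl)]
    simp only [Nat.add_sub_cancel]
    rcases zmod2_dichotomy (ω (Nat.find h) b) with h0 | h1
    · rw [h0, if_neg (by decide : ¬ (0:ZMod 2) = 1), add_zero]
    · rw [h1, if_pos (rfl : (1:ZMod 2) = 1), flip_self]
  · unfold bMap
    rw [if_neg (fun hcond => hc ((bMap_cond_iff h n).mp hcond))]
    by_cases h1 : ω (Nat.find h) b = 1
    · rw [if_pos h1, flip_other _ _ hc]
    · rw [if_neg h1]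

lemma bMap_of_not (b : Fin m → ZMod 2) {ζ : V} (h : ¬ hasZero ζ) :
    bMap 2 m ω b ζ = ζ := by
  funext n
  unfold bMap
  rw [if_neg]
  rintro ⟨-, -, hz⟩
  exact h ⟨_, hz⟩

lemma bMap_eq_or (b : Fin m → ZMod 2) (ζ : V) :
    bMap 2 m ω b ζ = ζ ∨ bMap 2 m ω b ζ = Bstep ζ := by
  by_cases h : hasZero ζ
  · rw [bMap_of_hasZero b h]
    by_cases h1 : ω (Nat.find h) b = 1
    · right; rw [if_pos h1]
    · left; rw [if_neg h1]
  · left; exact bMap_of_not b h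

lemma bMap_invol (b : Fin m → ZMod 2) (ζ : V) : bMap 2 m ω b (bMap 2 m ω b ζ) = ζ := by
  by_cases h : hasZero ζ
  · rw [bMap_of_hasZero b h]
    by_cases h1 : ω (Nat.find h) b = 1
    · rw [if_pos h1]
      obtain ⟨h', hfind⟩ := hasZero_Bstep h
      rw [bMap_of_hasZero b h', hfind, if_pos h1, Bstep_invol]
    · rw [if_neg h1, bMap_of_hasZero b h, if_neg h1]
  · rw [bMap_of_not b h, bMap_of_not b h]

/-! ### Cofinality -/

lemma cofinal_refl (ζ : V) : Cofinal ζ ζ := ⟨0, fun _ _ => rfl⟩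
lemma cofinal_symm {ζ η : V} (h : Cofinal ζ η) : Cofinal η ζ := by
  obtain ⟨N, hN⟩ := h; exact ⟨N, fun n hn => (hN n hn).symm⟩
lemma cofinal_trans {ζ η θ : V} (h1 : Cofinal ζ η) (h2 : Cofinal η θ) : Cofinal ζ θ := by
  obtain ⟨N1, h1⟩ := h1; obtain ⟨N2, h2⟩ := h2
  exact ⟨max N1 N2, fun n hn => (h1 n (le_trans (le_max_left _ _) hn)).trans
    (h2 n (le_trans (le_max_right _ _) hn))⟩

lemma Cof_eq_of_cofinal {ζ η : V} (h : Cofinal ζ η) : Cof ζ = Cof η := by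
  ext θ
  exact ⟨fun hθ => cofinal_trans (cofinal_symm h) hθ, fun hθ => cofinal_trans h hθ⟩

lemma cofinal_Astep (ζ : V) : Cofinal ζ (Astep ζ) :=
  ⟨1, fun n hn => (Astep_apply_pos ζ (by omega)).symm⟩
lemma cofinal_Bstep (ζ : V) : Cofinal ζ (Bstep ζ) := by
  by_cases h : hasZero ζ
  · exact ⟨Nat.find h + 2, fun n hn => by
      rw [Bstep_of_hasZero h, flip_other _ _ (by omega)]⟩
  · rw [Bstep_of_not h]; exact cofinal_refl ζ

/-- infinitely many zeros -/
def InfZeros (ζ : V) : Prop := ∀ N, ∃ n, N ≤ n ∧ ζ n = 0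

lemma not_cofinal_one_iff (ζ : V) : ¬ Cofinal ζ (fun _ => (1 : ZMod 2)) ↔ InfZeros ζ := by
  unfold Cofinal InfZeros
  push_neg
  constructor
  · intro h N
    obtain ⟨n, hn, hne⟩ := h N
    refine ⟨n, hn, ?_⟩
    rcases zmod2_dichotomy (ζ n) with h0 | h1
    · exact h0
    · exact absurd h1 hne
  · intro h N
    obtain ⟨n, hn, h0⟩ := h N
    refine ⟨n, hn, ?_⟩
    rw [h0]; decide

lemma infZeros_of_cofinal {ζ η : V} (hc : Cofinal ζ η) (h : InfZeros ζ) : InfZeros η := by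
  intro N
  obtain ⟨M, hM⟩ := hc
  obtain ⟨n, hn, h0⟩ := h (max N M)
  exact ⟨n, le_trans (le_max_left _ _) hn, by
    rw [← hM n (le_trans (le_max_right _ _) hn)]; exact h0⟩

lemma hasZero_of_infZeros {ζ : V} (h : InfZeros ζ) : hasZero ζ := by
  obtain ⟨n, -, h0⟩ := h 0; exact ⟨n, h0⟩

lemma hasZero_of_ne_one {ζ : V} (h : ζ ≠ (fun _ => (1 : ZMod 2))) : hasZero ζ := by
  by_contra hz
  apply h
  funext n
  rcases zmod2_dichotomy (ζ n) with h0 | h1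
  · exact absurd ⟨n, h0⟩ hz
  · exact h1

/-! ### The walk -/

def stepAt (n : ℤ) : V → V := if Even n then Astep else Bstep

def fwd (ρ : V) : ℕ → V
  | 0 => ρ
  | k + 1 => (if Even k then Astep else Bstep) (fwd ρ k)

def bwd (ρ : V) : ℕ → V
  | 0 => ρ
  | k + 1 => (if Even k then Bstep else Astep) (bwd ρ k)

def walk (ρ : V) (n : ℤ) : V := if 0 ≤ n then fwd ρ n.toNat else bwd ρ (-n).toNat

@[simp] lemma walk_zero (ρ : V) : walk ρ 0 = ρ := rfl

lemma walk_succ (ρ : V) (n : ℤ) : walk ρ (n + 1) = stepAt n (walk ρ n) := by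
  rcases le_or_gt 0 n with hn | hn
  · have h1 : (0:ℤ) ≤ n + 1 := by omega
    rw [walk, if_pos h1, walk, if_pos hn]
    have : (n+1).toNat = n.toNat + 1 := by omega
    rw [this]
    show (if Even n.toNat then Astep else Bstep) (fwd ρ n.toNat) = stepAt n (fwd ρ n.toNat)
    rw [stepAt]
    have hpar : Even n.toNat ↔ Even n := by
      rw [Nat.even_iff, Int.even_iff]; omega
    by_cases he : Even n.toNat
    · rw [if_pos he, if_pos (hpar.mp he)]
    · rw [if_neg he, if_neg (fun hh => he (hpar.mpr hh))]
  · rcases eq_or_lt_of_le (by omega : n ≤ -1) with heq | hlt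
    · subst heq
      show walk ρ 0 = stepAt (-1) (walk ρ (-1))
      rw [walk_zero, stepAt, if_neg (by decide)]
      show ρ = Bstep (walk ρ (-1))
      rw [walk, if_neg (by omega)]
      show ρ = Bstep (bwd ρ 1)
      show ρ = Bstep (Bstep (bwd ρ 0))
      rw [Bstep_invol]; rfl
    · -- n ≤ -2
      have h1 : ¬ (0:ℤ) ≤ n + 1 := by omega
      rw [walk, if_neg h1, walk, if_neg (by omega)]
      have hk : ∃ k : ℕ, (-(n+1)).toNat = k + 1 := ⟨(-(n+1)).toNat - 1, by omega⟩
      obtain ⟨k, hk⟩ := hk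
      have hk2 : (-n).toNat = k + 2 := by omega
      rw [hk, hk2]
      show bwd ρ (k+1) = stepAt n (bwd ρ (k+2))
      have : bwd ρ (k+2) = (if Even (k+1) then Bstep else Astep) (bwd ρ (k+1)) := rfl
      rw [this, stepAt]
      have hpar : Even n ↔ ¬ Even (k+1) := by
        rw [Int.even_iff, Nat.even_iff]
        omega
      by_cases he : Even (k+1)
      · rw [if_neg (by rw [hpar]; exact fun h => h he), if_pos he, Bstep_invol]
      · rw [if_pos (hpar.mpr he), if_neg he, Astep_invol]

lemma walk_cofinal (ρ : V) (n : ℤ) : Cofinal ρ (walk ρ n) := by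
  rcases le_or_gt 0 n with hn | hn
  · rw [walk, if_pos hn]
    generalize n.toNat = k
    induction k with
    | zero => exact cofinal_refl ρ
    | succ k ih =>
      show Cofinal ρ ((if Even k then Astep else Bstep) (fwd ρ k))
      by_cases he : Even k
      · rw [if_pos he]; exact cofinal_trans ih (cofinal_Astep _)
      · rw [if_neg he]; exact cofinal_trans ih (cofinal_Bstep _)
  · rw [walk, if_neg (by omega)]
    generalize (-n).toNat = k
    induction k with
    | zero => exact cofinal_refl ρ
    | succ k ih =>
      show Cofinal ρ ((if Even k then Bstep else Astep) (bwd ρ k))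
      by_cases he : Even k
      · rw [if_pos he]; exact cofinal_trans ih (cofinal_Bstep _)
      · rw [if_neg he]; exact cofinal_trans ih (cofinal_Astep _)

end SpinalAux
namespace SpinalAux

/-! ### The Gray-code potential -/

def zc (ζ : V) (i N : ℕ) : ℕ := ((Finset.Ico i N).filter (fun j => ζ j = 0)).card
def par (ζ : V) (i N : ℕ) : ℤ := (zc ζ i N : ℤ) % 2
def valN (N : ℕ) (ζ : V) : ℤ := ∑ i ∈ Finset.range N, par ζ i N * 2 ^ i

lemma par_bounds (ζ : V) (i N : ℕ) : 0 ≤ par ζ i N ∧ par ζ i N ≤ 1 := by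
  unfold par; omega

lemma zc_flip_add (ζ : V) {i k N : ℕ} (hik : i ≤ k) (hkN : k < N) :
    zc (flip k ζ) i N + zc ζ i N =
      2 * (((Finset.Ico i N).erase k).filter (fun j => ζ j = 0)).card + 1 := by
  have hmem : k ∈ Finset.Ico i N := Finset.mem_Ico.mpr ⟨hik, hkN⟩
  have hsplit : ∀ η : V, zc η i N =
      (((Finset.Ico i N).erase k).filter (fun j => η j = 0)).card
        + (if η k = 0 then 1 else 0) := by
    intro η
    unfold zc
    conv_lhs => rw [← Finset.insert_erase hmem]
    rw [Finset.filter_insert]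
    by_cases h : η k = 0
    · rw [if_pos h, Finset.card_insert_of_notMem (by simp), if_pos h]
    · rw [if_neg h, if_neg h, add_zero]
  rw [hsplit (flip k ζ), hsplit ζ]
  have herase : ((Finset.Ico i N).erase k).filter (fun j => flip k ζ j = 0)
      = ((Finset.Ico i N).erase k).filter (fun j => ζ j = 0) := by
    apply Finset.filter_congr
    intro j hj
    rw [flip_other _ _ (Finset.ne_of_mem_erase hj)]
  rw [herase]
  have hval : (flip k ζ k = 0) ↔ ¬ (ζ k = 0) := by
    rw [flip_self]
    rcases zmod2_dichotomy (ζ k) with h0 | h1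
    · rw [h0]; decide
    · rw [h1]; decide
  by_cases h : ζ k = 0
  · rw [if_neg (by rw [hval]; simp [h]), if_pos h]; ring
  · rw [if_pos (hval.mpr h), if_neg h]; ring

lemma par_flip_le (ζ : V) {i k N : ℕ} (hik : i ≤ k) (hkN : k < N) :
    par (flip k ζ) i N = 1 - par ζ i N := by
  have := zc_flip_add ζ hik hkN
  unfold par
  omega

lemma zc_flip_gt (ζ : V) {i k N : ℕ} (h : k < i) : zc (flip k ζ) i N = zc ζ i N := by
  unfold zc
  congr 1
  apply Finset.filter_congr
  intro j hj
  rw [flip_other _ _ (by have := (Finset.mem_Ico.mp hj).1; omega)]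

lemma par_flip_gt (ζ : V) {i k N : ℕ} (h : k < i) : par (flip k ζ) i N = par ζ i N := by
  unfold par; rw [zc_flip_gt ζ h]

lemma valN_Astep (ζ : V) {N : ℕ} (hN : 1 ≤ N) :
    valN N (Astep ζ) = valN N ζ + (1 - 2 * par ζ 0 N) ∧
      par (Astep ζ) 0 N = 1 - par ζ 0 N := by
  rw [Astep_eq_flip]
  constructor
  · have key : valN N (flip 0 ζ) - valN N ζ = 1 - 2 * par ζ 0 N := by
      unfold valN
      rw [← Finset.sum_sub_distrib]
      rw [Finset.sum_eq_single_of_mem 0 (Finset.mem_range.mpr hN)]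
      · rw [par_flip_le ζ (le_refl 0) hN]; ring
      · intro i _ hne
        rw [par_flip_gt ζ (Nat.pos_of_ne_zero hne)]; ring
    omega
  · exact par_flip_le ζ (le_refl 0) hN

lemma geom_sum_two (n : ℕ) : ∑ i ∈ Finset.range n, (2:ℤ) ^ i = 2 ^ n - 1 := by
  have := geom_sum_mul (2:ℤ) n
  have h2 : (2:ℤ) - 1 = 1 := by norm_num
  rw [h2, mul_one] at this
  exact this

lemma zc_first (ζ : V) (h : hasZero ζ) {i N : ℕ} (hir : i ≤ Nat.find h)
    (hN : Nat.find h < N) :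
    zc ζ i N = zc ζ (Nat.find h + 1) N + 1 := by
  set r := Nat.find h with hr
  have hunion : Finset.Ico i (r+1) ∪ Finset.Ico (r+1) N = Finset.Ico i N :=
    Finset.Ico_union_Ico_eq_Ico (by omega) (by omega)
  have hdisj : Disjoint (Finset.Ico i (r+1)) (Finset.Ico (r+1) N) := by
    apply Finset.disjoint_left.mpr
    intro a ha ha'
    have h1 := (Finset.mem_Ico.mp ha).2
    have h2 := (Finset.mem_Ico.mp ha').1
    omega
  unfold zc
  rw [← hunion, Finset.filter_union, Finset.card_union_of_disjoint
    (Finset.disjoint_filter_filter hdisj)]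
  have hsingle : (Finset.Ico i (r+1)).filter (fun j => ζ j = 0) = {r} := by
    ext j
    simp only [Finset.mem_filter, Finset.mem_Ico, Finset.mem_singleton]
    constructor
    · rintro ⟨⟨-, hj2⟩, hj3⟩
      by_contra hne
      exact Nat.find_min h (by omega) hj3
    · rintro rfl
      exact ⟨⟨hir, by omega⟩, Nat.find_spec h⟩
  rw [hsingle, Finset.card_singleton]
  ring

lemma par_first (ζ : V) (h : hasZero ζ) {i N : ℕ} (hir : i ≤ Nat.find h)
    (hN : Nat.find h < N) :
    par ζ i N = 1 - par ζ (Nat.find h + 1) N := by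
  have := zc_first ζ h hir hN
  unfold par
  omega

lemma valN_Bstep (ζ : V) (h : hasZero ζ) {N : ℕ} (hN : Nat.find h + 1 < N) :
    valN N (Bstep ζ) = valN N ζ - (1 - 2 * par ζ 0 N) ∧
      par (Bstep ζ) 0 N = 1 - par ζ 0 N := by
  set r := Nat.find h with hr
  rw [Bstep_of_hasZero h, ← hr]
  constructor
  · set v := par ζ (r+1) N with hv
    have hp0 : par ζ 0 N = 1 - v := par_first ζ h (by omega) (by omega)
    have key : valN N (flip (r+1) ζ) - valN N ζ = 1 - 2 * v := by
      unfold valN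
      rw [← Finset.sum_sub_distrib]
      have hzero : ∀ x ∈ Finset.range N, x ∉ Finset.range (r+2) →
          par (flip (r+1) ζ) x N * 2^x - par ζ x N * 2^x = 0 := by
        intro x _ hx
        rw [par_flip_gt ζ (by simp at hx; omega)]
        ring
      rw [← Finset.sum_subset (Finset.range_subset_range.mpr (by omega : r+2 ≤ N)) hzero]
      rw [Finset.sum_range_succ]
      have hlast : par (flip (r+1) ζ) (r+1) N * 2^(r+1) - par ζ (r+1) N * 2^(r+1)
          = (1 - 2*v) * 2^(r+1) := by
        rw [par_flip_le ζ (le_refl (r+1)) (by omega), ← hv]; ring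
      have hrest : ∀ x ∈ Finset.range (r+1),
          par (flip (r+1) ζ) x N * 2^x - par ζ x N * 2^x = (2*v - 1) * 2^x := by
        intro x hx
        have hxr : x ≤ r := by simp at hx; omega
        rw [par_flip_le ζ (by omega) (by omega), par_first ζ h hxr (by omega), ← hv]
        ring
      rw [Finset.sum_congr rfl hrest, ← Finset.mul_sum, geom_sum_two, hlast]
      ring
    omega
  · rw [par_flip_le ζ (by omega) (by omega)]

end SpinalAux
namespace SpinalAux

/-- sign of the walk -/
def eps (ρ : V) (n₀ : ℤ) (N : ℕ) : ℤ :=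
  if Even n₀ then 1 - 2 * par (walk ρ n₀) 0 N else 2 * par (walk ρ n₀) 0 N - 1

lemma eps_ne_zero (ρ : V) (n₀ : ℤ) (N : ℕ) : eps ρ n₀ N ≠ 0 := by
  have := par_bounds (walk ρ n₀) 0 N
  unfold eps
  by_cases h : Even n₀ <;> simp only [if_pos, if_neg, h] <;> omega

lemma walk_window (ρ : V) (n₀ : ℤ) (K : ℕ) (N : ℕ) (hA : 1 ≤ N)
    (hB : ∀ k : ℕ, k < K → ¬ Even (n₀ + k) →
      ∃ h : hasZero (walk ρ (n₀ + k)), Nat.find h + 1 < N) :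
    ∀ k : ℕ, k ≤ K →
      valN N (walk ρ (n₀ + k)) = valN N (walk ρ n₀) + k * eps ρ n₀ N ∧
      par (walk ρ (n₀ + k)) 0 N =
        (if Even k then par (walk ρ n₀) 0 N else 1 - par (walk ρ n₀) 0 N) := by
  intro k
  induction k with
  | zero => intro _; simp
  | succ k ih =>
    intro hk1
    obtain ⟨ihv, ihp⟩ := ih (by omega)
    have hstep : walk ρ (n₀ + (k+1 : ℕ)) = stepAt (n₀ + k) (walk ρ (n₀ + k)) := by
      rw [show (n₀ + (k+1 : ℕ)) = (n₀ + k) + 1 by push_cast; ring, walk_succ]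
    set p := par (walk ρ n₀) 0 N with hp
    by_cases he : Even (n₀ + (k:ℤ))
    · -- A-step
      have hAs : stepAt (n₀ + k) = Astep := if_pos he
      obtain ⟨hval, hpar⟩ := valN_Astep (walk ρ (n₀ + k)) hA
      rw [hstep, hAs]
      have hparity : (Even n₀ ↔ Even k) := by
        rw [Int.even_add, Int.even_coe_nat] at he
        exact he
      constructor
      · rw [hval, ihv, ihp]
        by_cases hn : Even n₀
        · rw [if_pos (hparity.mp hn)]
          unfold eps
          rw [if_pos hn]
          push_cast
          ring
        · rw [if_neg (fun hh => hn (hparity.mpr hh))]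
          unfold eps
          rw [if_neg hn]
          push_cast
          ring
      · rw [hpar, ihp]
        by_cases hkk : Even k
        · rw [if_pos hkk, if_neg (by simp [Nat.even_add_one, hkk])]
        · rw [if_neg hkk, if_pos (by simp [Nat.even_add_one, hkk])]
          ring
    · -- B-step
      have hBs : stepAt (n₀ + k) = Bstep := if_neg he
      obtain ⟨h0, hfind⟩ := hB k (by omega) he
      obtain ⟨hval, hpar⟩ := valN_Bstep (walk ρ (n₀ + k)) h0 hfind
      rw [hstep, hBs]
      have hparity : ¬ (Even n₀ ↔ Even k) := by
        rw [Int.even_add, Int.even_coe_nat] at he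
        exact he
      constructor
      · rw [hval, ihv, ihp]
        by_cases hn : Even n₀
        · rw [if_neg (fun hh => hparity ⟨fun _ => hh, fun _ => hn⟩)]
          unfold eps
          rw [if_pos hn]
          push_cast
          ring
        · rw [if_pos (by by_contra hkk; exact hparity ⟨fun h' => absurd h' hn, fun h' => absurd h' hkk⟩)]
          unfold eps
          rw [if_neg hn]
          push_cast
          ring
      · rw [hpar, ihp]
        by_cases hkk : Even k
        · rw [if_pos hkk, if_neg (by simp [Nat.even_add_one, hkk])]
        · rw [if_neg hkk, if_pos (by simp [Nat.even_add_one, hkk])]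
          ring

open scoped Classical in
/-- a bound for the position affected at a word -/
def zbound (ζ : V) : ℕ := if h : hasZero ζ then Nat.find h + 2 else 0

lemma walk_injective (ρ : V) (hρ : InfZeros ρ) : Function.Injective (walk ρ) := by
  have key : ∀ n n' : ℤ, n < n' → walk ρ n ≠ walk ρ n' := by
    intro n n' hlt heq
    set K := (n' - n).toNat with hK
    have hK1 : 1 ≤ K := by omega
    have hn' : n + (K : ℤ) = n' := by omega
    set N := 1 + (Finset.range K).sup (fun k => zbound (walk ρ (n + k))) with hN
    have hA : 1 ≤ N := by omega
    have hB : ∀ k : ℕ, k < K → ¬ Even (n + (k:ℤ)) →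
        ∃ h : hasZero (walk ρ (n + k)), Nat.find h + 1 < N := by
      intro k hk _
      have hz : hasZero (walk ρ (n + k)) :=
        hasZero_of_infZeros (infZeros_of_cofinal (walk_cofinal ρ _) hρ)
      refine ⟨hz, ?_⟩
      have hle : zbound (walk ρ (n + k)) ≤ (Finset.range K).sup
          (fun k => zbound (walk ρ (n + k))) :=
        Finset.le_sup (f := fun k : ℕ => zbound (walk ρ (n + k))) (Finset.mem_range.mpr hk)
      rw [zbound, dif_pos hz] at hle
      omega
    obtain ⟨hval, -⟩ := walk_window ρ n K N hA hB K (le_refl K)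
    rw [hn', heq] at hval
    have heps := eps_ne_zero ρ n N
    have : (K:ℤ) * eps ρ n N = 0 := by omega
    rcases mul_eq_zero.mp this with h | h
    · omega
    · exact heps h
  intro n n' heq
  by_contra hne
  rcases lt_or_gt_of_ne hne with h | h
  · exact key n n' h heq
  · exact key n' n h heq.symm

/-! ### The ray from the all-ones word -/

def oneW : V := fun _ => (1 : ZMod 2)

lemma one_ne_zero' : ((1:ZMod 2) = 0) → False := by decide

lemma not_hasZero_oneW : ¬ hasZero oneW := by
  rintro ⟨i, hi⟩
  exact one_ne_zero' hi

lemma valN_oneW (N : ℕ) : valN N oneW = 0 := by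
  unfold valN
  apply Finset.sum_eq_zero
  intro i _
  have : zc oneW i N = 0 := by
    unfold zc
    rw [Finset.card_eq_zero, Finset.filter_eq_empty_iff]
    intro j _
    exact one_ne_zero'
  unfold par
  rw [this]
  simp

lemma par_oneW (i N : ℕ) : par oneW i N = 0 := by
  have : zc oneW i N = 0 := by
    unfold zc
    rw [Finset.card_eq_zero, Finset.filter_eq_empty_iff]
    intro j _
    exact one_ne_zero'
  unfold par
  rw [this]
  simp

lemma walk_oneW_nonneg (k : ℕ) : walk oneW (k : ℤ) = fwd oneW k := by
  rw [walk, if_pos (by omega)]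
  norm_num

/-- every positive-index word on the ray has a zero -/
lemma fwd_oneW_hasZero : ∀ k : ℕ, 1 ≤ k → hasZero (fwd oneW k) := by
  intro k
  induction k using Nat.strong_induction_on with
  | _ k ih =>
    intro hk1
    set N := 1 + (Finset.range k).sup (fun j => zbound (fwd oneW j)) with hN
    have hA : 1 ≤ N := by omega
    have hB : ∀ j : ℕ, j < k → ¬ Even ((0:ℤ) + (j:ℤ)) →
        ∃ h : hasZero (walk oneW ((0:ℤ) + j)), Nat.find h + 1 < N := by
      intro j hj hodd
      have hj1 : 1 ≤ j := by
        by_contra h0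
        apply hodd
        have : j = 0 := by omega
        rw [this]
        decide
      have hz : hasZero (walk oneW ((0:ℤ) + j)) := by
        rw [show (0:ℤ) + j = (j:ℤ) by ring, walk_oneW_nonneg]
        exact ih j hj hj1
      refine ⟨hz, ?_⟩
      have hz' : hasZero (fwd oneW j) := by
        rw [show (0:ℤ) + j = (j:ℤ) by ring, walk_oneW_nonneg] at hz
        exact hz
      have hle : zbound (fwd oneW j) ≤ (Finset.range k).sup
          (fun j => zbound (fwd oneW j)) :=
        Finset.le_sup (f := fun j : ℕ => zbound (fwd oneW j)) (Finset.mem_range.mpr hj)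
      rw [zbound, dif_pos hz'] at hle
      have : Nat.find hz = Nat.find hz' := by
        congr 1 <;> rw [show (0:ℤ) + j = (j:ℤ) by ring, walk_oneW_nonneg]
      omega
    obtain ⟨hval, -⟩ := walk_window oneW 0 k N hA hB k (le_refl k)
    rw [show (0:ℤ) + (k:ℤ) = (k:ℤ) by ring, walk_oneW_nonneg] at hval
    rw [walk_zero] at hval
    rw [valN_oneW] at hval
    have heps : eps oneW 0 N = 1 := by
      unfold eps
      rw [if_pos (by decide), walk_zero, par_oneW]
      ring
    rw [heps] at hval
    apply hasZero_of_ne_one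
    intro hone
    have hv0 : valN N (fwd oneW k) = 0 := by
      rw [hone]; exact valN_oneW N
    rw [hv0] at hval
    omega

end SpinalAux
namespace SpinalAux

/-! ### Walk step lemmas -/

lemma walk_Astep (ρ : V) (n : ℤ) (he : Even n) : Astep (walk ρ n) = walk ρ (n+1) := by
  rw [walk_succ, stepAt, if_pos he]

lemma walk_Astep' (ρ : V) (n : ℤ) (he : ¬ Even n) : Astep (walk ρ n) = walk ρ (n-1) := by
  have h2 : Even (n-1) := by rw [Int.even_iff] at he ⊢; omega
  have hw := walk_succ ρ (n-1)
  rw [stepAt, if_pos h2, show n - 1 + 1 = n by ring] at hw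
  rw [hw, Astep_invol]

lemma walk_Bstep (ρ : V) (n : ℤ) (he : ¬ Even n) : Bstep (walk ρ n) = walk ρ (n+1) := by
  rw [walk_succ, stepAt, if_neg he]

lemma walk_Bstep' (ρ : V) (n : ℤ) (he : Even n) : Bstep (walk ρ n) = walk ρ (n-1) := by
  have h2 : ¬ Even (n-1) := by rw [Int.even_iff] at he ⊢; omega
  have hw := walk_succ ρ (n-1)
  rw [stepAt, if_neg h2, show n - 1 + 1 = n by ring] at hw
  rw [hw, Bstep_invol]

/-! ### Reachability and surjectivity -/

def StepRel (ζ η : V) : Prop := η = Astep ζ ∨ η = Bstep ζ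

def Reach : V → V → Prop := Relation.ReflTransGen StepRel

lemma zmod2_ne_imp (x y : ZMod 2) (h : x ≠ y) : y = x + 1 := by revert x y; decide

lemma reach_of_agree : ∀ N : ℕ, ∀ ζ ζ' : V, (∀ n, N ≤ n → ζ n = ζ' n) → Reach ζ ζ' := by
  intro N
  induction N using Nat.strong_induction_on with
  | _ N ih =>
    intro ζ ζ' hag
    match N, ih with
    | 0, _ =>
      have h : ζ = ζ' := funext fun n => hag n (by omega)
      rw [h]
      exact Relation.ReflTransGen.refl
    | 1, _ =>
      by_cases h0 : ζ 0 = ζ' 0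
      · have h : ζ = ζ' := by
          funext n
          rcases Nat.eq_zero_or_pos n with rfl | hn
          · exact h0
          · exact hag n (by omega)
        rw [h]
        exact Relation.ReflTransGen.refl
      · have h : ζ' = Astep ζ := by
          funext n
          rcases Nat.eq_zero_or_pos n with rfl | hn
          · rw [Astep_apply_zero]; exact zmod2_ne_imp _ _ h0
          · rw [Astep_apply_pos _ (by omega)]; exact (hag n (by omega)).symm
        exact Relation.ReflTransGen.single (Or.inl h)
    | (N+2), ih =>
      by_cases hsame : ζ (N+1) = ζ' (N+1)
      · refine ih (N+1) (by omega) ζ ζ' (fun n hn => ?_)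
        rcases eq_or_lt_of_le hn with rfl | hlt
        · exact hsame
        · exact hag n (by omega)
      · obtain ⟨u, hu0, hu1, hutail⟩ : ∃ u : V, u N = 0 ∧ (∀ i, i < N → u i = 1)
            ∧ ∀ n, N + 1 ≤ n → u n = ζ n := by
          refine ⟨fun i => if i < N then 1 else if i = N then 0 else ζ i, ?_, ?_, ?_⟩
          · simp
          · intro i hi; simp [hi]
          · intro n hn
            simp only
            rw [if_neg (by omega), if_neg (by omega)]
        have h1 : Reach ζ u := ih (N+1) (by omega) ζ u
          (fun n hn => (hutail n hn).symm)
        have hz : hasZero u := ⟨N, hu0⟩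
        have hfind : Nat.find hz = N := by
          apply le_antisymm (Nat.find_min' hz hu0)
          by_contra hlt
          push_neg at hlt
          exact one_ne_zero' (by rw [← hu1 _ hlt]; exact Nat.find_spec hz)
        have hBu : Bstep u = flip (N+1) u := by
          rw [Bstep_of_hasZero hz, hfind]
        have h2 : Reach u (Bstep u) := Relation.ReflTransGen.single (Or.inr rfl)
        have h3 : Reach (Bstep u) ζ' := by
          refine ih (N+1) (by omega) _ _ (fun n hn => ?_)
          rw [hBu]
          rcases eq_or_lt_of_le hn with rfl | hlt
          · rw [flip_self, hutail _ (le_refl _)]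
            exact (zmod2_ne_imp _ _ hsame).symm
          · rw [flip_other _ _ (by omega), hutail n (by omega)]
            exact hag n (by omega)
        exact (h1.trans h2).trans h3

lemma reach_range (ρ : V) {ζ : V} (h : Reach ρ ζ) : ∃ n : ℤ, walk ρ n = ζ := by
  induction h with
  | refl => exact ⟨0, rfl⟩
  | tail _ hstep ih =>
    obtain ⟨n, rfl⟩ := ih
    rcases hstep with h | h
    · by_cases he : Even n
      · exact ⟨n + 1, by rw [← walk_Astep ρ n he, h]⟩
      · exact ⟨n - 1, by rw [← walk_Astep' ρ n he, h]⟩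
    · by_cases he : Even n
      · exact ⟨n - 1, by rw [← walk_Bstep' ρ n he, h]⟩
      · exact ⟨n + 1, by rw [← walk_Bstep ρ n he, h]⟩

lemma cof_mem_range_walk (ρ : V) {ζ : V} (h : ζ ∈ Cof ρ) : ∃ n : ℤ, walk ρ n = ζ := by
  obtain ⟨N, hN⟩ := h
  exact reach_range ρ (reach_of_agree N ρ ζ hN)

lemma bwd_oneW (k : ℕ) : bwd oneW (k + 1) = fwd oneW k := by
  induction k with
  | zero =>
    show Bstep oneW = oneW
    exact Bstep_of_not not_hasZero_oneW
  | succ k ih =>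
    show (if Even (k+1) then Bstep else Astep) (bwd oneW (k+1)) = fwd oneW (k+1)
    rw [ih]
    show _ = (if Even k then Astep else Bstep) (fwd oneW k)
    by_cases he : Even k
    · rw [if_neg (by simp [Nat.even_add_one, he]), if_pos he]
    · rw [if_pos (by simp [Nat.even_add_one, he]), if_neg he]

lemma cof_oneW_fwd {ζ : V} (h : ζ ∈ Cof oneW) : ∃ k : ℕ, fwd oneW k = ζ := by
  obtain ⟨n, rfl⟩ := cof_mem_range_walk oneW h
  rcases le_or_gt 0 n with hn | hn
  · exact ⟨n.toNat, by rw [← walk_oneW_nonneg, Int.toNat_of_nonneg hn]⟩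
  · rw [walk, if_neg (by omega)]
    obtain ⟨k, hk⟩ : ∃ k : ℕ, (-n).toNat = k + 1 := ⟨(-n).toNat - 1, by omega⟩
    rw [hk, bwd_oneW]
    exact ⟨k, rfl⟩

end SpinalAux
namespace SpinalAux

variable {m : ℕ} {ω : ℕ → ((Fin m → ZMod 2) →+ ZMod 2)}

open scoped Classical in
/-- enumeration of the generating set by `B` -/
def eGen (ω : ℕ → ((Fin m → ZMod 2) →+ ZMod 2)) : (Fin m → ZMod 2) → (Bd 2 → Bd 2) :=
  fun b => if b = 0 then aMap 2 else bMap 2 m ω b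

lemma eGen_zero : eGen ω 0 = Astep := by rw [eGen, if_pos rfl]; rfl
lemma eGen_ne {b : Fin m → ZMod 2} (hb : b ≠ 0) : eGen ω b = bMap 2 m ω b := by
  rw [eGen, if_neg hb]

lemma genSet_eq : genSet 2 m ω = Set.range (eGen ω) := by
  ext f
  constructor
  · rintro (⟨j, hj1, hj2, rfl⟩ | ⟨b, hb, rfl⟩)
    · have hj : j = 1 := by omega
      subst hj
      exact ⟨0, by rw [eGen_zero, Function.iterate_one]; rfl⟩
    · exact ⟨b, eGen_ne hb⟩
  · rintro ⟨b, rfl⟩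
    by_cases hb : b = 0
    · subst hb
      left
      exact ⟨1, le_refl 1, by norm_num, by rw [eGen_zero, Function.iterate_one]; rfl⟩
    · right
      exact ⟨b, hb, eGen_ne (ω := ω) hb⟩

lemma omega_separates (hω : InOmega 2 m ω) {b b' : Fin m → ZMod 2} (hne : b ≠ b') :
    ∃ r, ω r b ≠ ω r b' := by
  by_contra h
  push_neg at h
  apply hne
  have := hω.2 0 (b - b') (fun j _ => by rw [map_sub, h j, sub_self])
  exact sub_eq_zero.mp this

lemma bMap_ne_bMap (hω : InOmega 2 m ω) {b b' : Fin m → ZMod 2} (hne : b ≠ b') :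
    bMap 2 m ω b ≠ bMap 2 m ω b' := by
  obtain ⟨r, hr⟩ := omega_separates hω hne
  intro hcontra
  obtain ⟨ζ, hζr, hζlt⟩ : ∃ ζ : V, ζ r = 0 ∧ ∀ i, i < r → ζ i = 1 :=
    ⟨fun i => if i < r then 1 else 0, by simp, fun i hi => by simp [hi]⟩
  have hz : hasZero ζ := ⟨r, hζr⟩
  have hfind : Nat.find hz = r := by
    apply le_antisymm (Nat.find_min' hz hζr)
    by_contra hlt
    push_neg at hlt
    exact one_ne_zero' (by rw [← hζlt _ hlt]; exact Nat.find_spec hz)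
  have heq : bMap 2 m ω b ζ = bMap 2 m ω b' ζ := by rw [hcontra]
  rw [bMap_of_hasZero b hz, bMap_of_hasZero b' hz, hfind] at heq
  rcases zmod2_dichotomy (ω r b) with h1 | h1 <;>
    rcases zmod2_dichotomy (ω r b') with h2 | h2
  · exact hr (h1.trans h2.symm)
  · rw [if_neg (by rw [h1]; decide), if_pos h2] at heq
    exact Bstep_ne hz heq.symm
  · rw [if_pos h1, if_neg (by rw [h2]; decide)] at heq
    exact Bstep_ne hz heq
  · exact hr (h1.trans h2.symm)

lemma aMap_ne_bMap (b : Fin m → ZMod 2) : aMap 2 ≠ bMap 2 m ω b := by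
  intro h
  have h1 : aMap 2 oneW 0 = bMap 2 m ω b oneW 0 := by rw [h]
  rw [bMap_of_not b not_hasZero_oneW] at h1
  have h2 : aMap 2 oneW 0 = Astep oneW 0 := rfl
  rw [h2, Astep_apply_zero] at h1
  exact zmod2_add_one_ne _ h1

lemma eGen_injective (hω : InOmega 2 m ω) : Function.Injective (eGen ω) := by
  intro b b' h
  by_contra hne
  by_cases hb : b = 0 <;> by_cases hb' : b' = 0
  · exact hne (hb.trans hb'.symm)
  · subst hb
    rw [eGen_zero, eGen_ne hb'] at h
    exact aMap_ne_bMap b' h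
  · subst hb'
    rw [eGen_zero, eGen_ne hb] at h
    exact aMap_ne_bMap b h.symm
  · rw [eGen_ne hb, eGen_ne hb'] at h
    exact bMap_ne_bMap hω hne h

lemma mult_eq_ncard (hω : InOmega 2 m ω) (u v : V) :
    mult 2 m ω u v = {b : Fin m → ZMod 2 | eGen ω b u = v}.ncard := by
  have h1 : mult 2 m ω u v = {f : Bd 2 → Bd 2 | f ∈ genSet 2 m ω ∧ f u = v}.ncard := by
    rw [mult]
    exact Nat.card_coe_set_eq _
  rw [h1]
  have h2 : {f : Bd 2 → Bd 2 | f ∈ genSet 2 m ω ∧ f u = v}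
      = eGen ω '' {b | eGen ω b u = v} := by
    ext f
    simp only [Set.mem_setOf_eq, Set.mem_image, genSet_eq, Set.mem_range]
    constructor
    · rintro ⟨⟨b, rfl⟩, hfu⟩
      exact ⟨b, hfu, rfl⟩
    · rintro ⟨b, hbu, rfl⟩
      exact ⟨⟨b, rfl⟩, hbu⟩
  rw [h2, Set.ncard_image_of_injective _ (eGen_injective hω)]

lemma card_ker (r : ℕ) (hs : Function.Surjective (ω r)) (hm : 1 ≤ m) :
    (Finset.univ.filter (fun b : Fin m → ZMod 2 => ω r b = 0)).card = 2^(m-1) ∧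
    (Finset.univ.filter (fun b : Fin m → ZMod 2 => ω r b = 1)).card = 2^(m-1) := by
  obtain ⟨b1, hb1⟩ := hs 1
  have hcardB : Fintype.card (Fin m → ZMod 2) = 2^m := by
    rw [Fintype.card_fun]
    simp
  have hbij : (Finset.univ.filter (fun b : Fin m → ZMod 2 => ω r b = 0)).card
      = (Finset.univ.filter (fun b : Fin m → ZMod 2 => ω r b = 1)).card := by
    apply Finset.card_bij' (fun b _ => b + b1) (fun c _ => c - b1)
    · intro a ha
      simp only [Finset.mem_filter, Finset.mem_univ, true_and] at ha ⊢
      rw [map_add, ha, hb1, zero_add]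
    · intro a ha
      simp only [Finset.mem_filter, Finset.mem_univ, true_and] at ha ⊢
      rw [map_sub, ha, hb1, sub_self]
    · intro a _
      simp
    · intro a _
      simp
  have hsum : (Finset.univ.filter (fun b : Fin m → ZMod 2 => ω r b = 0)).card
      + (Finset.univ.filter (fun b : Fin m → ZMod 2 => ¬ ω r b = 0)).card
      = Fintype.card (Fin m → ZMod 2) := by
    rw [Finset.card_filter_add_card_filter_not]
    rfl
  have hneg : (Finset.univ.filter (fun b : Fin m → ZMod 2 => ¬ ω r b = 0)).card
      = (Finset.univ.filter (fun b : Fin m → ZMod 2 => ω r b = 1)).card := by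
    congr 1
    apply Finset.filter_congr
    intro b _
    exact zmod2_ne_zero_iff _
  rw [hneg, ← hbij, hcardB] at hsum
  have hpow : 2^m = 2^(m-1) * 2 := by
    rw [← pow_succ]
    congr 1
    omega
  constructor
  · omega
  · omega

lemma mult_self_hasZero (hω : InOmega 2 m ω) (hm : 1 ≤ m) {u : V} (h : hasZero u) :
    mult 2 m ω u u = 2^(m-1) - 1 := by
  rw [mult_eq_ncard hω]
  have hset : {b : Fin m → ZMod 2 | eGen ω b u = u}
      = ↑((Finset.univ.filter (fun b : Fin m → ZMod 2 => ω (Nat.find h) b = 0)).erase 0) := by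
    ext b
    simp only [Set.mem_setOf_eq, Finset.coe_erase, Set.mem_diff, Finset.mem_coe,
      Finset.mem_filter, Finset.mem_univ, true_and, Set.mem_singleton_iff]
    constructor
    · intro hb
      by_cases hb0 : b = 0
      · subst hb0
        rw [eGen_zero] at hb
        exact absurd hb (Astep_ne u)
      · refine ⟨?_, hb0⟩
        rw [eGen_ne hb0, bMap_of_hasZero b h] at hb
        rcases zmod2_dichotomy (ω (Nat.find h) b) with h0 | h1
        · exact h0
        · rw [if_pos h1] at hb
          exact absurd hb (Bstep_ne h)
    · rintro ⟨h0, hb0⟩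
      rw [eGen_ne hb0, bMap_of_hasZero b h, if_neg (by rw [h0]; decide)]
  rw [hset, Set.ncard_coe_finset,
    Finset.card_erase_of_mem (by simp only [Finset.mem_filter, Finset.mem_univ, true_and]; rw [map_zero]),
    (card_ker _ (hω.1 (Nat.find h)) hm).1]

lemma mult_self_noZero (hω : InOmega 2 m ω) {u : V} (h : ¬ hasZero u) :
    mult 2 m ω u u = 2^m - 1 := by
  rw [mult_eq_ncard hω]
  have hset : {b : Fin m → ZMod 2 | eGen ω b u = u}
      = ↑((Finset.univ : Finset (Fin m → ZMod 2)).erase 0) := by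
    ext b
    simp only [Set.mem_setOf_eq, Finset.coe_erase, Set.mem_diff, Finset.mem_coe,
      Finset.mem_univ, true_and, Set.mem_singleton_iff]
    constructor
    · intro hb
      intro hb0
      subst hb0
      rw [eGen_zero] at hb
      exact absurd hb (Astep_ne u)
    · intro hb0
      rw [eGen_ne hb0, bMap_of_not b h]
  rw [hset, Set.ncard_coe_finset, Finset.card_erase_of_mem (Finset.mem_univ 0),
    Finset.card_univ]
  congr 1
  rw [Fintype.card_fun]
  simp

lemma mult_Astep (hω : InOmega 2 m ω) (u : V) :
    mult 2 m ω u (Astep u) = 1 := by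
  rw [mult_eq_ncard hω]
  have hset : {b : Fin m → ZMod 2 | eGen ω b u = Astep u} = {0} := by
    ext b
    simp only [Set.mem_setOf_eq, Set.mem_singleton_iff]
    constructor
    · intro hb
      by_contra hb0
      rw [eGen_ne hb0] at hb
      rcases bMap_eq_or b u with h | h
      · rw [h] at hb
        exact Astep_ne u hb.symm
      · rw [h] at hb
        exact Astep_ne_Bstep u hb.symm
    · rintro rfl
      rw [eGen_zero]
  rw [hset, Set.ncard_singleton]

lemma mult_Bstep (hω : InOmega 2 m ω) (hm : 1 ≤ m) {u : V} (h : hasZero u) :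
    mult 2 m ω u (Bstep u) = 2^(m-1) := by
  rw [mult_eq_ncard hω]
  have hset : {b : Fin m → ZMod 2 | eGen ω b u = Bstep u}
      = ↑(Finset.univ.filter (fun b : Fin m → ZMod 2 => ω (Nat.find h) b = 1)) := by
    ext b
    simp only [Set.mem_setOf_eq, Finset.mem_coe, Finset.mem_filter, Finset.mem_univ, true_and]
    constructor
    · intro hb
      by_cases hb0 : b = 0
      · subst hb0
        rw [eGen_zero] at hb
        exact absurd hb (Astep_ne_Bstep u)
      · rw [eGen_ne hb0, bMap_of_hasZero b h] at hb
        rcases zmod2_dichotomy (ω (Nat.find h) b) with h0 | h1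
        · rw [if_neg (by rw [h0]; decide)] at hb
          exact absurd hb.symm (Bstep_ne h)
        · exact h1
    · intro h1
      have hb0 : b ≠ 0 := by
        intro hb0
        subst hb0
        rw [map_zero] at h1
        exact absurd h1 (by decide)
      rw [eGen_ne hb0, bMap_of_hasZero b h, if_pos h1]
  rw [hset, Set.ncard_coe_finset, (card_ker _ (hω.1 (Nat.find h)) hm).2]

lemma mult_other (hω : InOmega 2 m ω) {u v : V} (hu : v ≠ u) (ha : v ≠ Astep u)
    (hb : v ≠ Bstep u) : mult 2 m ω u v = 0 := by
  rw [mult_eq_ncard hω]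
  have hset : {b : Fin m → ZMod 2 | eGen ω b u = v} = (∅ : Set (Fin m → ZMod 2)) := by
    ext b
    simp only [Set.mem_setOf_eq, Set.mem_empty_iff_false, iff_false]
    intro hbu
    by_cases hb0 : b = 0
    · subst hb0
      rw [eGen_zero] at hbu
      exact ha hbu.symm
    · rw [eGen_ne hb0] at hbu
      rcases bMap_eq_or b u with h | h
      · rw [h] at hbu
        exact hu hbu.symm
      · rw [h] at hbu
        exact hb hbu.symm
  rw [hset, Set.ncard_empty]

lemma mult_adj (hω : InOmega 2 m ω) {u v : V} (h : mult 2 m ω u v ≠ 0) :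
    v = u ∨ v = Astep u ∨ v = Bstep u := by
  by_contra hc
  push_neg at hc
  exact h (mult_other hω hc.1 hc.2.1 hc.2.2)

lemma genSet_invol {f : Bd 2 → Bd 2} (h : f ∈ genSet 2 m ω) (x : Bd 2) : f (f x) = x := by
  rw [genSet_eq] at h
  obtain ⟨b, rfl⟩ := h
  by_cases hb : b = 0
  · subst hb
    rw [eGen_zero]
    exact Astep_invol x
  · rw [eGen_ne hb]
    exact bMap_invol b x

lemma mult_comm' (u v : Bd 2) : mult 2 m ω u v = mult 2 m ω v u := by
  rw [mult, mult]
  apply Nat.card_congr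
  apply Equiv.subtypeEquivRight
  intro f
  constructor
  · rintro ⟨hf, rfl⟩
    exact ⟨hf, genSet_invol hf u⟩
  · rintro ⟨hf, rfl⟩
    exact ⟨hf, genSet_invol hf v⟩

end SpinalAux
namespace SpinalAux

variable {m : ℕ} {ω : ℕ → ((Fin m → ZMod 2) →+ ZMod 2)}

/-- model multiplicity function on `ℤ` -/
def Mfun (m : ℕ) (n n' : ℤ) : ℕ :=
  if n' = n then 2^(m-1) - 1
  else if n' = n + 1 then (if Even n then 1 else 2^(m-1))
  else if n = n' + 1 then (if Even n' then 1 else 2^(m-1))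
  else 0

lemma mult_walk (hω : InOmega 2 m ω) (hm : 1 ≤ m) (ρ : V) (hρ : InfZeros ρ) (n n' : ℤ) :
    mult 2 m ω (walk ρ n) (walk ρ n') = Mfun m n n' := by
  have hz : ∀ k : ℤ, hasZero (walk ρ k) := fun k =>
    hasZero_of_infZeros (infZeros_of_cofinal (walk_cofinal ρ k) hρ)
  have hinj := walk_injective ρ hρ
  unfold Mfun
  by_cases h1 : n' = n
  · subst h1
    rw [if_pos rfl]
    exact mult_self_hasZero hω hm (hz n')
  rw [if_neg h1]
  by_cases h2 : n' = n + 1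
  · subst h2
    rw [if_pos rfl]
    by_cases he : Even n
    · rw [if_pos he, ← walk_Astep ρ n he]
      exact mult_Astep hω _
    · rw [if_neg he, ← walk_Bstep ρ n he]
      exact mult_Bstep hω hm (hz n)
  rw [if_neg h2]
  by_cases h3 : n = n' + 1
  · rw [if_pos h3, mult_comm']
    subst h3
    by_cases he : Even n'
    · rw [if_pos he, ← walk_Astep ρ n' he]
      exact mult_Astep hω _
    · rw [if_neg he, ← walk_Bstep ρ n' he]
      exact mult_Bstep hω hm (hz n')
  · rw [if_neg h3]
    apply mult_other hω
    · intro h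
      exact h1 (hinj h)
    · intro h
      by_cases he : Even n
      · rw [walk_Astep ρ n he] at h
        exact h2 (hinj h)
      · rw [walk_Astep' ρ n he] at h
        have := hinj h
        omega
    · intro h
      by_cases he : Even n
      · rw [walk_Bstep' ρ n he] at h
        have := hinj h
        omega
      · rw [walk_Bstep ρ n he] at h
        exact h2 (hinj h)

lemma iso_of_infZeros (hω : InOmega 2 m ω) (hm : 1 ≤ m) {ξ η : Bd 2}
    (hξ : InfZeros ξ) (hη : InfZeros η) :
    ∃ φ : ↥(Cof ξ) ≃ ↥(Cof η), IsRootedIso 2 m ω ξ η φ := by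
  have bijξ : Function.Bijective
      (fun n : ℤ => (⟨walk ξ n, walk_cofinal ξ n⟩ : ↥(Cof ξ))) := by
    constructor
    · intro a b hab
      exact walk_injective ξ hξ (congrArg Subtype.val hab)
    · rintro ⟨ζ, hζ⟩
      obtain ⟨n, hn⟩ := cof_mem_range_walk ξ hζ
      exact ⟨n, Subtype.ext hn⟩
  have bijη : Function.Bijective
      (fun n : ℤ => (⟨walk η n, walk_cofinal η n⟩ : ↥(Cof η))) := by
    constructor
    · intro a b hab
      exact walk_injective η hη (congrArg Subtype.val hab)
    · rintro ⟨ζ, hζ⟩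
      obtain ⟨n, hn⟩ := cof_mem_range_walk η hζ
      exact ⟨n, Subtype.ext hn⟩
  set eξ := Equiv.ofBijective _ bijξ with heξ
  set eη := Equiv.ofBijective _ bijη with heη
  refine ⟨eξ.symm.trans eη, ?_, ?_⟩
  · show eη (eξ.symm ⟨ξ, self_mem_Cof ξ⟩) = ⟨η, self_mem_Cof η⟩
    have h0 : eξ 0 = ⟨ξ, self_mem_Cof ξ⟩ := Subtype.ext (walk_zero ξ)
    rw [← h0, Equiv.symm_apply_apply]
    exact Subtype.ext (walk_zero η)
  · intro u v
    have hu : (u : Bd 2) = walk ξ (eξ.symm u) :=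
      congrArg Subtype.val (eξ.apply_symm_apply u).symm
    have hv : (v : Bd 2) = walk ξ (eξ.symm v) :=
      congrArg Subtype.val (eξ.apply_symm_apply v).symm
    have hu' : ((eξ.symm.trans eη u : ↥(Cof η)) : Bd 2) = walk η (eξ.symm u) := rfl
    have hv' : ((eξ.symm.trans eη v : ↥(Cof η)) : Bd 2) = walk η (eξ.symm v) := rfl
    rw [hu, hv, hu', hv', mult_walk hω hm ξ hξ, mult_walk hω hm η hη]

lemma pow_contra (hm : 1 ≤ m) (h : 2^m - 1 = 2^(m-1) - 1) : False := by
  have h1 : 2^(m-1) < 2^m := Nat.pow_lt_pow_right (by norm_num) (by omega)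
  have h2 : 1 ≤ 2^(m-1) := Nat.one_le_two_pow
  omega

lemma fwd_oneW_mem_cof {ξ : Bd 2} (hA : Cofinal ξ oneW) (k : ℕ) : fwd oneW k ∈ Cof ξ :=
  cofinal_trans hA (by rw [← walk_oneW_nonneg]; exact walk_cofinal oneW k)

/-- case C : both roots cofinal with the all-ones word -/
lemma no_iso_both (hω : InOmega 2 m ω) (hm : 1 ≤ m) {ξ η : Bd 2} (hne : ξ ≠ η)
    (hA : Cofinal ξ oneW) (hB : Cofinal η oneW)
    (φ : ↥(Cof ξ) ≃ ↥(Cof η)) (hroot : φ ⟨ξ, self_mem_Cof ξ⟩ = ⟨η, self_mem_Cof η⟩)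
    (hmult : ∀ u v : ↥(Cof ξ), mult 2 m ω ↑u ↑v = mult 2 m ω ↑(φ u) ↑(φ v)) : False := by
  set g : ℕ → V := fwd oneW with hg
  have memξ : ∀ k, g k ∈ Cof ξ := fwd_oneW_mem_cof hA
  -- base : φ fixes the all-ones word
  have base : (↑(φ ⟨g 0, memξ 0⟩) : Bd 2) = g 0 := by
    by_contra hne'
    have hz : hasZero (↑(φ ⟨g 0, memξ 0⟩) : Bd 2) := hasZero_of_ne_one hne'
    have h1 := hmult ⟨g 0, memξ 0⟩ ⟨g 0, memξ 0⟩
    rw [mult_self_hasZero hω hm hz] at h1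
    have h2 : mult 2 m ω (g 0) (g 0) = 2^m - 1 :=
      mult_self_noZero hω not_hasZero_oneW
    rw [h2] at h1
    exact pow_contra hm h1
  have main : ∀ n, ∀ k, k ≤ n → (↑(φ ⟨g k, memξ k⟩) : Bd 2) = g k := by
    intro n
    induction n with
    | zero =>
      intro k hk
      have : k = 0 := by omega
      subst this
      exact base
    | succ n ih =>
      intro k hk
      rcases Nat.lt_or_ge k (n+1) with hlt | hge
      · exact ih k (by omega)
      · have hk1 : k = n + 1 := by omega
        subst hk1
        -- the step
        have hstep : g (n+1) = (if Even n then Astep else Bstep) (g n) := rfl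
        have hpos : mult 2 m ω (g n) (g (n+1)) ≠ 0 := by
          rw [hstep]
          by_cases he : Even n
          · rw [if_pos he, mult_Astep hω]
            omega
          · have hn1 : 1 ≤ n := by
              rcases Nat.eq_zero_or_pos n with rfl | h
              · exact absurd (by decide) he
              · omega
            rw [if_neg he, mult_Bstep hω hm (fwd_oneW_hasZero n hn1)]
            have : (0:ℕ) < 2^(m-1) := Nat.pow_pos (by norm_num)
            omega
        have hx := hmult ⟨g n, memξ n⟩ ⟨g (n+1), memξ (n+1)⟩
        rw [ih n (le_refl n)] at hx
        set x : Bd 2 := ↑(φ ⟨g (n+1), memξ (n+1)⟩) with hxdef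
        rw [hx] at hpos
        have hadj := mult_adj hω hpos
        -- identify the neighbors of g n
        rcases Nat.eq_zero_or_pos n with rfl | hn1
        · -- n = 0 : g 0 = oneW, Astep (g 0) = g 1, Bstep (g 0) = g 0
          have hBg : Bstep (g 0) = g 0 := Bstep_of_not not_hasZero_oneW
          have hAg : Astep (g 0) = g 1 := rfl
          rcases hadj with h | h | h
          · exfalso
            have : φ ⟨g 1, memξ 1⟩ = φ ⟨g 0, memξ 0⟩ := Subtype.ext (h.trans base.symm)
            have heq := φ.injective this
            have : g 1 = g 0 := congrArg Subtype.val heq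
            rw [← hAg] at this
            exact Astep_ne _ this
          · rw [h, hAg]
          · exfalso
            rw [hBg] at h
            have : φ ⟨g 1, memξ 1⟩ = φ ⟨g 0, memξ 0⟩ := Subtype.ext (h.trans base.symm)
            have heq := φ.injective this
            have : g 1 = g 0 := congrArg Subtype.val heq
            rw [← hAg] at this
            exact Astep_ne _ this
        · -- n ≥ 1
          have hzn : hasZero (g n) := fwd_oneW_hasZero n hn1
          have hprev : g n = (if Even (n-1) then Astep else Bstep) (g (n-1)) := by
            conv_lhs => rw [show n = (n-1) + 1 by omega]
            rfl
          have hnbrs : (Astep (g n) = g (n+1) ∧ Bstep (g n) = g (n-1)) ∨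
              (Bstep (g n) = g (n+1) ∧ Astep (g n) = g (n-1)) := by
            by_cases he : Even n
            · left
              constructor
              · rw [hstep, if_pos he]
              · have he' : ¬ Even (n-1) := by
                  rw [Nat.even_iff] at he ⊢
                  omega
                rw [hprev, if_neg he', Bstep_invol]
            · right
              constructor
              · rw [hstep, if_neg he]
              · have he' : Even (n-1) := by
                  rw [Nat.even_iff] at he ⊢
                  omega
                rw [hprev, if_pos he', Astep_invol]
          have hne_self : g (n+1) ≠ g n := by
            rw [hstep]
            by_cases he : Even n
            · rw [if_pos he]
              exact Astep_ne _
            · rw [if_neg he]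
              exact Bstep_ne hzn
          have hne_prev : g (n+1) ≠ g (n-1) := by
            rcases hnbrs with ⟨h1, h2⟩ | ⟨h1, h2⟩
            · rw [← h1, ← h2]
              intro hcc
              exact Astep_ne_Bstep _ hcc
            · rw [← h1, ← h2]
              intro hcc
              exact Astep_ne_Bstep _ hcc.symm
          -- kill the bad cases
          have hkill : ∀ j : ℕ, j ≤ n → g (n+1) ≠ g j → x = g j → False := by
            intro j hj hneq hxj
            have : φ ⟨g (n+1), memξ (n+1)⟩ = φ ⟨g j, memξ j⟩ :=
              Subtype.ext (hxj.trans (ih j hj).symm)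
            have heq := φ.injective this
            exact hneq (congrArg Subtype.val heq)
          rcases hadj with h | h | h
          · exact absurd h (fun hh => hkill n (le_refl n) hne_self hh)
          · rcases hnbrs with ⟨h1, h2⟩ | ⟨h1, h2⟩
            · exact h.trans h1
            · exact absurd (h.trans h2) (fun hh => hkill (n-1) (by omega) hne_prev hh)
          · rcases hnbrs with ⟨h1, h2⟩ | ⟨h1, h2⟩
            · exact absurd (h.trans h2) (fun hh => hkill (n-1) (by omega) hne_prev hh)
            · exact h.trans h1
  -- conclusion
  obtain ⟨kξ, hkξ⟩ := cof_oneW_fwd (cofinal_symm hA)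
  have h1 : (⟨ξ, self_mem_Cof ξ⟩ : ↥(Cof ξ)) = ⟨g kξ, memξ kξ⟩ := Subtype.ext hkξ.symm
  have h2 := main kξ kξ (le_refl _)
  rw [← h1, hroot] at h2
  exact hne (hkξ.symm.trans h2.symm)

end SpinalAux

open SpinalAux

/-- for `d = 2`, `m ≥ 2`, `ω ∈ Ω_{2,m}` and distinct `ξ, η ∈ X^ℕ`, the
rooted graphs `(Γ_ξ, ξ)` and `(Γ_η, η)` are isomorphic as rooted, undirected, unlabeled
graphs iff neither `ξ` nor `η` is cofinal with the constant word `1^ℕ`. -/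
theorem rooted_iso_iff_d2 (m : ℕ) (hm : 2 ≤ m)
    (ω : ℕ → ((Fin m → ZMod 2) →+ ZMod 2)) (hω : InOmega 2 m ω)
    (ξ η : Bd 2) (hne : ξ ≠ η) :
    (∃ φ : ↥(Cof ξ) ≃ ↥(Cof η), IsRootedIso 2 m ω ξ η φ) ↔
      ¬ Cofinal ξ (fun _ => (1 : ZMod 2)) ∧ ¬ Cofinal η (fun _ => (1 : ZMod 2)) := by
  have hm1 : 1 ≤ m := by omega
  constructor
  · rintro ⟨φ, hroot, hmult⟩
    by_cases hA : Cofinal ξ (fun _ => (1 : ZMod 2)) <;>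
      by_cases hB : Cofinal η (fun _ => (1 : ZMod 2))
    · exact absurd (no_iso_both hω hm1 hne hA hB φ hroot hmult) not_false
    · exfalso
      have hη := (not_cofinal_one_iff η).mp hB
      have hmem : oneW ∈ Cof ξ := hA
      have h1 := hmult ⟨oneW, hmem⟩ ⟨oneW, hmem⟩
      have h2 : mult 2 m ω oneW oneW = 2^m - 1 :=
        mult_self_noZero hω not_hasZero_oneW
      have hzu : hasZero (↑(φ ⟨oneW, hmem⟩) : Bd 2) :=
        hasZero_of_infZeros (infZeros_of_cofinal (φ ⟨oneW, hmem⟩).2 hη)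
      rw [h2, mult_self_hasZero hω hm1 hzu] at h1
      exact pow_contra hm1 h1
    · exfalso
      have hξ := (not_cofinal_one_iff ξ).mp hA
      have hmem : oneW ∈ Cof η := hB
      have h1 := hmult (φ.symm ⟨oneW, hmem⟩) (φ.symm ⟨oneW, hmem⟩)
      rw [Equiv.apply_symm_apply] at h1
      have hzu : hasZero (↑(φ.symm ⟨oneW, hmem⟩) : Bd 2) :=
        hasZero_of_infZeros (infZeros_of_cofinal (φ.symm ⟨oneW, hmem⟩).2 hξ)
      rw [mult_self_hasZero hω hm1 hzu, mult_self_noZero hω not_hasZero_oneW] at h1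
      exact pow_contra hm1 h1.symm
    · exact ⟨hA, hB⟩
  · rintro ⟨h1, h2⟩
    exact iso_of_infZeros hω hm1 ((not_cofinal_one_iff ξ).mp h1)
      ((not_cofinal_one_iff η).mp h2)

end
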